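/- For n ≥ 2, R_n ≤ ∑_{p=1}^{κ_n} ∑_{n_1+⋯+n_p=n, n_i ≥ 1} R_{⌈n_1/2⌉} R_{⌈n_2/2⌉} ⋯ R_{⌈n_p/2⌉}, where κ_n = ⌈c·n/ln n⌉ and c is a constant such that every rich word of length n has UPS-factorization with at most c·n/ln n parts. -/

import Mathlib

set_option linter.unusedSectionVars false
set_option linter.unusedVariables false
/-- A word is rich if it has exactly `length + 1` distinct palindromic factors. -/
def Rich {A : Type*} (u : List A) : Prop :=
  {v : List A | v <:+: u ∧ v.reverse = v}.ncard = u.length + 1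

/-- The number of rich words of length `n` over an alphabet with `q` letters. -/
noncomputable def numRich (q n : ℕ) : ℕ :=
  {u : List (Fin q) | u.length = n ∧ Rich u}.ncard

/-- `UPSFactorization l w` : `l = [w_p, …, w_1]` is a factorization of `w` into distinct
nonempty palindromes such that each `w_i` is the longest palindromic suffix of `w_p ⋯ w_i`. -/
def UPSFactorization {A : Type*} (l : List (List A)) (w : List A) : Prop :=
  l.flatten = w ∧ [] ∉ l ∧ l.Nodup ∧
  (∀ i : Fin l.length, (l.get i).reverse = l.get i) ∧
  ∀ i : Fin l.length, ∀ v : List A,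
    v <:+ (l.take (i + 1)).flatten → v.reverse = v → v.length ≤ (l.get i).length

set_option linter.unusedSectionVars false

section LPS
variable {A : Type*} [DecidableEq A]

/-- Length of the longest palindromic suffix. -/
def lpsLen (u : List A) : ℕ :=
  Nat.findGreatest (fun k => (u.drop (u.length - k)).reverse = u.drop (u.length - k)) u.length

/-- The longest palindromic suffix. -/
def lps (u : List A) : List A := u.drop (u.length - lpsLen u)

lemma lpsLen_le (u : List A) : lpsLen u ≤ u.length := Nat.findGreatest_le _

lemma lps_suffix (u : List A) : lps u <:+ u := List.drop_suffix _ _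

lemma lps_palindrome (u : List A) : (lps u).reverse = lps u := by
  have := Nat.findGreatest_spec (P := fun k => (u.drop (u.length - k)).reverse = u.drop (u.length - k))
    (Nat.zero_le u.length) (by simp)
  exact this

lemma length_lps (u : List A) : (lps u).length = lpsLen u := by
  have := lpsLen_le u
  simp [lps]; omega

lemma suffix_eq_drop {v u : List A} (h : v <:+ u) : v = u.drop (u.length - v.length) := by
  obtain ⟨t, rfl⟩ := h
  simp

lemma suffix_eq_of_length_eq {v w u : List A} (hv : v <:+ u) (hw : w <:+ u)
    (h : v.length = w.length) : v = w := by
  rw [suffix_eq_drop hv, suffix_eq_drop hw, h]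

lemma suffix_of_suffix_length_le' {v s u : List A} (hv : v <:+ u) (hs : s <:+ u)
    (h : v.length ≤ s.length) : v <:+ s := by
  have hsl := hs.length_le
  rw [suffix_eq_drop hv, suffix_eq_drop hs]
  have : u.drop (u.length - v.length)
      = (u.drop (u.length - s.length)).drop (s.length - v.length) := by
    rw [List.drop_drop]; congr 1; omega
  rw [this]
  exact List.drop_suffix _ _

lemma lps_max {u v : List A} (hv : v <:+ u) (hp : v.reverse = v) :
    v.length ≤ (lps u).length := by
  rw [length_lps]
  refine Nat.le_findGreatest hv.length_le ?_
  rw [← suffix_eq_drop hv]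
  exact hp

lemma lps_ne_nil {u : List A} (h : u ≠ []) : lps u ≠ [] := by
  have h1 : (1:ℕ) ≤ (lps u).length := by
    have hd : u.drop (u.length - 1) <:+ u := List.drop_suffix _ _
    have hlen : (u.drop (u.length - 1)).length = 1 := by
      have : 0 < u.length := List.length_pos_iff.2 h
      simp; omega
    obtain ⟨a, ha⟩ := List.length_eq_one_iff.1 hlen
    have := lps_max hd (by rw [ha]; simp)
    omega
  intro hc
  rw [hc] at h1; simp at h1

end LPS
section Pal
variable {A : Type*} [DecidableEq A]

def PalSet (u : List A) : Set (List A) := {v | v <:+: u ∧ v.reverse = v}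

lemma rich_iff (u : List A) : Rich u ↔ (PalSet u).ncard = u.length + 1 := Iff.rfl

lemma palSet_finite (u : List A) : (PalSet u).Finite := by
  apply Set.Finite.subset u.sublists.toFinset.finite_toSet
  intro v hv
  simp only [Finset.coe_sort_coe, List.coe_toFinset, Set.mem_setOf_eq, List.mem_sublists]
  exact hv.1.sublist

lemma palSet_mono {u w : List A} (h : u <:+: w) : PalSet u ⊆ PalSet w :=
  fun v hv => ⟨hv.1.trans h, hv.2⟩

lemma nil_mem_palSet (u : List A) : [] ∈ PalSet u := ⟨List.nil_infix, rfl⟩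

lemma palSet_nil : PalSet ([] : List A) = {[]} := by
  ext v; simp [PalSet]; intro h; simp [h]

/-- A factor of `u ++ [a]` which is not a factor of `u` is a suffix of `u ++ [a]`. -/
lemma infix_concat {v u : List A} {a : A} (h : v <:+: u ++ [a]) :
    v <:+: u ∨ v <:+ u ++ [a] := by
  obtain ⟨x, y, hxy⟩ := h
  rcases List.eq_nil_or_concat y with rfl | ⟨y', b, rfl⟩
  · right; exact ⟨x, by simpa using hxy⟩
  · left
    simp only [List.concat_eq_append] at hxy
    have := congrArg List.dropLast hxy
    simp only [← List.append_assoc] at this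
    rw [List.dropLast_concat, List.dropLast_concat] at this
    exact ⟨x, y', by simpa using this⟩

/-- Key step: appending a letter adds at most one new palindromic factor,
namely the longest palindromic suffix. -/
lemma palSet_concat_subset (u : List A) (a : A) :
    PalSet (u ++ [a]) ⊆ PalSet u ∪ {lps (u ++ [a])} := by
  rintro v ⟨hinf, hpal⟩
  rcases infix_concat hinf with h | hsuf
  · exact Or.inl ⟨h, hpal⟩
  by_cases hlen : v.length = (lps (u ++ [a])).length
  · right
    exact suffix_eq_of_length_eq hsuf (lps_suffix _) (by rw [hlen, length_lps])
  · left
    have hle : v.length ≤ (lps (u ++ [a])).length := lps_max hsuf hpal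
    have hlt : v.length < (lps (u ++ [a])).length := lt_of_le_of_ne hle hlen
    set s := lps (u ++ [a]) with hs
    have hvs : v <:+ s := suffix_of_suffix_length_le' hsuf (lps_suffix _) hle
    -- v is a palindromic suffix of the palindrome s, hence a prefix of s
    have hvp : v <+: s := by
      have : v.reverse <+: s.reverse := by
        rw [List.reverse_prefix]; exact hvs
      rwa [hpal, lps_palindrome] at this
    -- and a proper prefix, hence a factor of u
    obtain ⟨r, hr⟩ := hvp
    have hrne : r ≠ [] := by
      intro hre; rw [hre, List.append_nil] at hr
      rw [hr] at hlt; omega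
    obtain ⟨x, hx⟩ := lps_suffix (u ++ [a])
    rw [← hs] at hx
    obtain ⟨r', b, rfl⟩ := (List.eq_nil_or_concat r).resolve_left hrne
    simp only [List.concat_eq_append] at hr
    have : x ++ (v ++ (r' ++ [b])) = u ++ [a] := by rw [hr]; exact hx
    have h2 := congrArg List.dropLast this
    simp only [← List.append_assoc] at h2
    rw [List.dropLast_concat, List.dropLast_concat] at h2
    refine ⟨⟨x, r', by simpa using h2⟩, hpal⟩

lemma ncard_palSet_concat (u : List A) (a : A) :
    (PalSet (u ++ [a])).ncard ≤ (PalSet u).ncard + 1 := by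
  calc (PalSet (u ++ [a])).ncard ≤ (PalSet u ∪ {lps (u ++ [a])}).ncard :=
        Set.ncard_le_ncard (palSet_concat_subset u a)
          ((palSet_finite u).union (Set.finite_singleton _))
    _ ≤ (PalSet u).ncard + ({lps (u ++ [a])} : Set (List A)).ncard :=
        Set.ncard_union_le _ _
    _ = (PalSet u).ncard + 1 := by rw [Set.ncard_singleton]

lemma ncard_palSet_append_le (u v : List A) :
    (PalSet (u ++ v)).ncard ≤ (PalSet u).ncard + v.length := by
  induction v using List.reverseRecOn with
  | nil => simp
  | append_singleton v' a ih =>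
      rw [← List.append_assoc]
      calc (PalSet (u ++ v' ++ [a])).ncard ≤ (PalSet (u ++ v')).ncard + 1 :=
            ncard_palSet_concat _ _
        _ ≤ (PalSet u).ncard + v'.length + 1 := by omega
        _ = (PalSet u).ncard + (v' ++ [a]).length := by simp; omega

lemma ncard_palSet_le (u : List A) : (PalSet u).ncard ≤ u.length + 1 := by
  have := ncard_palSet_append_le [] u
  simp [palSet_nil] at this
  omega

lemma rich_prefix {w u : List A} (h : u <+: w) (hw : Rich w) : Rich u := by
  obtain ⟨v, rfl⟩ := h
  rw [rich_iff] at *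
  have h1 := ncard_palSet_append_le u v
  have h2 := ncard_palSet_le u
  rw [hw] at *
  simp only [List.length_append] at *
  omega

lemma palSet_reverse (u : List A) : PalSet u.reverse = PalSet u := by
  ext v
  constructor
  · rintro ⟨hinf, hpal⟩
    refine ⟨?_, hpal⟩
    have : v.reverse <:+: u.reverse.reverse := by rw [List.reverse_infix]; exact hinf
    rwa [hpal, List.reverse_reverse] at this
  · rintro ⟨hinf, hpal⟩
    refine ⟨?_, hpal⟩
    have : v.reverse <:+: u.reverse := by rw [List.reverse_infix]; exact hinf
    rwa [hpal] at this

lemma rich_reverse {u : List A} (h : Rich u) : Rich u.reverse := by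
  rw [rich_iff] at *
  rwa [palSet_reverse, List.length_reverse]

lemma rich_infix {v w : List A} (h : v <:+: w) (hw : Rich w) : Rich v := by
  obtain ⟨x, y, rfl⟩ := h
  rw [List.append_assoc] at hw
  have h1 : v ++ y <:+ x ++ (v ++ y) := ⟨x, rfl⟩
  have h2 : (v ++ y).reverse <+: (x ++ (v ++ y)).reverse := by
    rw [List.reverse_prefix]; exact h1
  have h3 : Rich (v ++ y).reverse := rich_prefix h2 (rich_reverse hw)
  have h4 : Rich (v ++ y) := by
    have := rich_reverse h3; rwa [List.reverse_reverse] at this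
  have h5 : Rich v := rich_prefix ⟨y, rfl⟩ h4
  exact h5

/-- In a rich word, the longest palindromic suffix is a *new* palindrome. -/
lemma lps_not_mem_palSet {u : List A} {a : A} (h : Rich (u ++ [a])) :
    lps (u ++ [a]) ∉ PalSet u := by
  intro hmem
  have hsub : PalSet (u ++ [a]) ⊆ PalSet u := by
    intro v hv
    rcases palSet_concat_subset u a hv with h' | h'
    · exact h'
    · rw [Set.mem_singleton_iff] at h'; rw [h']; exact hmem
  have h1 : (PalSet (u ++ [a])).ncard ≤ (PalSet u).ncard :=
    Set.ncard_le_ncard hsub (palSet_finite u)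
  have h2 := ncard_palSet_le u
  rw [rich_iff] at h
  simp only [List.length_append, List.length_singleton] at h
  omega

end Pal
section UPS
variable {A : Type*} [DecidableEq A]

def upsFac (u : List A) : List (List A) :=
  if h : u = [] then [] else
    upsFac (u.take (u.length - (lps u).length)) ++ [lps u]
termination_by u.length
decreasing_by
  have h1 : (lps u).length ≠ 0 := by
    simpa [List.length_eq_zero_iff] using lps_ne_nil h
  have h2 : 0 < u.length := List.length_pos_iff.2 h
  have h3 := (lps u |>.length) |> fun _ => lpsLen_le u
  simp only [List.length_take]
  omega

lemma upsFac_nil : upsFac ([] : List A) = [] := by rw [upsFac]; simp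

lemma upsFac_ne (u : List A) (h : u ≠ []) :
    upsFac u = upsFac (u.take (u.length - (lps u).length)) ++ [lps u] := by
  rw [upsFac]; simp [h]

lemma take_append_suffix {v u : List A} (h : v <:+ u) :
    u.take (u.length - v.length) ++ v = u := by
  obtain ⟨t, rfl⟩ := h
  rw [List.length_append, Nat.add_sub_cancel, List.take_left]

lemma flatten_prefix_of_prefix {L₁ L₂ : List (List A)} (h : L₁ <+: L₂) :
    L₁.flatten <+: L₂.flatten := by
  obtain ⟨L₃, rfl⟩ := h
  rw [List.flatten_append]
  exact ⟨L₃.flatten, rfl⟩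

theorem upsFac_spec (u : List A) :
    (upsFac u).flatten = u ∧ [] ∉ upsFac u ∧
    (∀ i : Fin (upsFac u).length, ((upsFac u).get i).reverse = (upsFac u).get i) ∧
    (∀ i : Fin (upsFac u).length, ∀ v : List A,
      v <:+ ((upsFac u).take (i + 1)).flatten → v.reverse = v →
        v.length ≤ ((upsFac u).get i).length) := by
  by_cases h : u = []
  · subst h
    refine ⟨by simp [upsFac_nil], by simp [upsFac_nil], ?_, ?_⟩ <;>
      · rw [upsFac_nil]; intro i; exact absurd i.isLt (by simp)
  · have h1 : (lps u).length ≠ 0 := by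
      simpa [List.length_eq_zero_iff] using lps_ne_nil h
    have h2 : 0 < u.length := List.length_pos_iff.2 h
    set u' := u.take (u.length - (lps u).length) with hu'
    have hdec : u'.length < u.length := by
      simp only [hu', List.length_take]; omega
    obtain ⟨ihf, ihn, ihp, ihm⟩ := upsFac_spec u'
    rw [upsFac_ne u h, ← hu']
    have hsplit : u' ++ lps u = u := by
      rw [hu']; exact take_append_suffix (lps_suffix u)
    set l' := upsFac u' with hl'
    have hlen : (l' ++ [lps u]).length = l'.length + 1 := by simp
    refine ⟨?_, ?_, ?_, ?_⟩
    · rw [List.flatten_append, ihf]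
      simpa using hsplit
    · simp only [List.mem_append, List.mem_singleton]
      rintro (hc | hc)
      · exact ihn hc
      · exact lps_ne_nil h hc.symm
    · intro i
      rcases lt_or_ge (i : ℕ) l'.length with hi | hi
      · have : (l' ++ [lps u]).get i = l'.get ⟨i, hi⟩ := by
          simp [List.getElem_append_left hi]
        rw [this]; exact ihp ⟨i, hi⟩
      · have hieq : (i : ℕ) = l'.length := by
          have h5 := i.isLt
          simp only [List.length_append, List.length_singleton] at h5; omega
        have : (l' ++ [lps u]).get i = lps u := by
          simp [List.get_eq_getElem, hieq, List.getElem_concat_length]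
        rw [this]; exact lps_palindrome u
    · intro i v hv hpal
      rcases lt_or_ge (i : ℕ) l'.length with hi | hi
      · have htake : (l' ++ [lps u]).take ((i : ℕ) + 1) = l'.take ((i : ℕ) + 1) := by
          rw [List.take_append_of_le_length (by omega)]
        have hget : (l' ++ [lps u]).get i = l'.get ⟨i, hi⟩ := by
          simp [List.getElem_append_left hi]
        rw [htake] at hv
        rw [hget]
        exact ihm ⟨i, hi⟩ v hv hpal
      · have hieq : (i : ℕ) = l'.length := by
          have h5 := i.isLt
          simp only [List.length_append, List.length_singleton] at h5; omega
        have htake : (l' ++ [lps u]).take ((i : ℕ) + 1) = l' ++ [lps u] := by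
          apply List.take_of_length_le
          simp only [List.length_append, List.length_singleton]; omega
        have hget : (l' ++ [lps u]).get i = lps u := by
          simp [List.get_eq_getElem, hieq, List.getElem_concat_length]
        rw [htake, List.flatten_append, ihf] at hv
        have : u' ++ [lps u].flatten = u := by simpa using hsplit
        rw [this] at hv
        rw [hget]
        exact lps_max hv hpal
termination_by u.length

end UPS
section Nodup
variable {A : Type*} [DecidableEq A]

lemma prefix_dropLast {x y : List A} (h : x <+: y) (hlen : x.length < y.length) :
    x <+: y.dropLast := by
  rw [List.dropLast_eq_take]
  have hx : x = y.take x.length := List.prefix_iff_eq_take.1 h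
  have : x = (y.take (y.length - 1)).take x.length := by
    rw [List.take_take, min_eq_left (by omega)]
    exact hx
  rw [this]
  exact List.take_prefix _ _

lemma take_flatten_prefix (l : List (List A)) (k : ℕ) :
    (l.take k).flatten <+: l.flatten :=
  flatten_prefix_of_prefix (List.take_prefix _ _)

lemma get_suffix_take_flatten (l : List (List A)) (i : Fin l.length) :
    l.get i <:+ (l.take ((i : ℕ) + 1)).flatten := by
  have h : l.take ((i : ℕ) + 1) = l.take (i : ℕ) ++ [l.get i] := by
    rw [List.take_succ]
    congr 1
    rw [List.getElem?_eq_getElem i.isLt]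
    rfl
  rw [h, List.flatten_append]
  exact ⟨(l.take (i : ℕ)).flatten, by simp⟩

theorem upsFac_nodup {w : List A} (hw : Rich w) : (upsFac w).Nodup := by
  obtain ⟨hf, hn, hp, hm⟩ := upsFac_spec w
  set l := upsFac w with hl
  rw [List.nodup_iff_injective_get]
  intro i j hij
  by_contra hne
  -- wlog i < j
  have key : ∀ i j : Fin l.length, (i : ℕ) < (j : ℕ) → l.get i ≠ l.get j := by
    clear hij hne i j
    intro i j hlt heq
    set Pj := (l.take ((j : ℕ) + 1)).flatten with hPj
    set Pi := (l.take ((i : ℕ) + 1)).flatten with hPi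
    have hgetj_ne : l.get j ≠ [] := fun hc => hn (hc ▸ List.get_mem l j)
    have hgeti_ne : l.get i ≠ [] := fun hc => hn (hc ▸ List.get_mem l i)
    have hsufj : l.get j <:+ Pj := get_suffix_take_flatten l j
    have hsufi : l.get i <:+ Pi := get_suffix_take_flatten l i
    -- l.get j = lps Pj
    have hlpsj : l.get j = lps Pj := by
      apply suffix_eq_of_length_eq hsufj (lps_suffix Pj)
      have h1 : (l.get j).length ≤ (lps Pj).length := lps_max hsufj (hp j)
      have h2 : (lps Pj).length ≤ (l.get j).length :=
        hm j (lps Pj) (lps_suffix Pj) (lps_palindrome Pj)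
      omega
    -- Pj is a rich prefix of w
    have hPjw : Pj <+: w := by rw [← hf]; exact take_flatten_prefix l _
    have hPj_rich : Rich Pj := rich_prefix hPjw hw
    have hPj_ne : Pj ≠ [] := by
      intro hc
      exact hgetj_ne (List.suffix_nil.mp (hc ▸ hsufj))
    -- the new palindrome property
    have hnew : lps Pj ∉ PalSet Pj.dropLast := by
      have hQ : Pj.dropLast ++ [Pj.getLast hPj_ne] = Pj := List.dropLast_append_getLast hPj_ne
      have hrich' : Rich (Pj.dropLast ++ [Pj.getLast hPj_ne]) := by rw [hQ]; exact hPj_rich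
      have := lps_not_mem_palSet hrich'
      rwa [hQ] at this
    -- but l.get i = l.get j is a factor of Pj.dropLast
    have hPij : Pi <+: (l.take (j : ℕ)).flatten := by
      have : l.take ((i : ℕ) + 1) = (l.take (j : ℕ)).take ((i : ℕ) + 1) := by
        rw [List.take_take, min_eq_left (by omega)]
      rw [hPi, this]
      exact take_flatten_prefix _ _
    have hstep : l.take ((j : ℕ) + 1) = l.take (j : ℕ) ++ [l.get j] := by
      rw [List.take_succ]
      congr 1
      rw [List.getElem?_eq_getElem j.isLt]
      rfl
    have hlenj : (l.take (j : ℕ)).flatten.length + (l.get j).length = Pj.length := by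
      rw [hPj, hstep, List.flatten_append]
      simp
    have hgetjpos : 0 < (l.get j).length := List.length_pos_iff.2 hgetj_ne
    have hPi_dropLast : Pi <+: Pj.dropLast := by
      have hPjPj : (l.take (j : ℕ)).flatten <+: Pj :=
        ⟨[l.get j].flatten, by rw [hPj, hstep, List.flatten_append]⟩
      apply prefix_dropLast (hPij.trans hPjPj)
      have := hPij.length_le
      omega
    have hmem : l.get i ∈ PalSet Pj.dropLast :=
      ⟨(hsufi.isInfix).trans hPi_dropLast.isInfix, hp i⟩
    rw [heq, hlpsj] at hmem
    exact hnew hmem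
  rcases lt_trichotomy (i : ℕ) (j : ℕ) with h | h | h
  · exact key i j h hij
  · exact hne (Fin.ext h)
  · exact key j i h hij.symm

theorem upsFac_isUPS {w : List A} (hw : Rich w) (hne : w ≠ []) :
    UPSFactorization (upsFac w) w := by
  obtain ⟨hf, hn, hp, hm⟩ := upsFac_spec w
  exact ⟨hf, hn, upsFac_nodup hw, hp, hm⟩

end Nodup
section Half
variable {A : Type*}

lemma pal_getElem {v : List A} (hv : v.reverse = v) {k : ℕ} (hk : k < v.length) :
    v[k] = v[v.length - 1 - k]'(by omega) := by
  have h1 : v.reverse[k]'(by simpa using hk) = v[v.length - 1 - k]'(by omega) :=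
    List.getElem_reverse _
  have h2 : v.reverse[k]'(by simpa using hk) = v[k] := by
    simp only [hv]
  rw [← h2, h1]

lemma pal_take_half_eq {v v' : List A} (hv : v.reverse = v) (hv' : v'.reverse = v')
    (hlen : v.length = v'.length)
    (h : v.take ((v.length + 1) / 2) = v'.take ((v.length + 1) / 2)) : v = v' := by
  apply List.ext_getElem hlen
  intro k hk hk'
  set m := v.length with hm
  have hsame : ∀ (j : ℕ) (hj1 : j < (m + 1) / 2) (hj2 : j < m),
      v[j]'(by omega) = v'[j]'(by omega) := by
    intro j hj hjm
    have h1 : (v.take ((m + 1) / 2))[j]'(by rw [List.length_take]; omega) = v[j]'(by omega) :=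
      List.getElem_take
    have h2 : (v'.take ((m + 1) / 2))[j]'(by rw [List.length_take]; omega) = v'[j]'(by omega) :=
      List.getElem_take
    rw [← h1, ← h2]
    congr 1
  by_cases hc : k < (m + 1) / 2
  · exact hsame k hc hk
  · have hk2 : m - 1 - k < (m + 1) / 2 := by omega
    rw [pal_getElem hv hk, pal_getElem hv' (by omega : k < v'.length)]
    have h3 := hsame (m - 1 - k) hk2 (by omega)
    convert h3 using 2 <;> omega

end Half
lemma sum_get_length {A : Type*} (l : List (List A)) :
    ∑ i : Fin l.length, (l.get i).length = l.flatten.length := by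
  rw [List.length_flatten]
  conv_rhs => rw [← List.ofFn_get l]
  rw [List.map_ofFn, List.sum_ofFn]
  rfl

theorem numRich_recursive_bound (q : ℕ) (hq : 2 ≤ q) (c : ℝ) (hc : 1 < c)
    (hUPS : ∀ w : List (Fin q), Rich w → 2 ≤ w.length →
      ∀ l : List (List (Fin q)), UPSFactorization l w →
        (l.length : ℝ) ≤ c * w.length / Real.log w.length)
    (n : ℕ) (hn : 2 ≤ n) :
    numRich q n ≤ ∑ p ∈ Finset.Icc 1 ⌈c * n / Real.log n⌉₊,
      ∑ f ∈ (Finset.Nat.antidiagonalTuple p n).filter (fun f => ∀ i, 1 ≤ f i),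
        ∏ i, numRich q ((f i + 1) / 2) := by
  classical
  have hSfin : {u : List (Fin q) | u.length = n ∧ Rich u}.Finite :=
    Set.Finite.subset (List.finite_length_eq (Fin q) n) (fun u hu => hu.1)
  set κ := ⌈c * (n : ℝ) / Real.log n⌉₊ with hκ
  set S := hSfin.toFinset with hS
  set F : List (Fin q) → (Σ p : ℕ, Fin p → ℕ) :=
    (fun w => ⟨(upsFac w).length, fun i => ((upsFac w).get i).length⟩) with hF
  set idx := (Finset.Icc 1 κ).sigma
      (fun p => (Finset.Nat.antidiagonalTuple p n).filter fun f => ∀ i, 1 ≤ f i) with hidx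
  have hwS : ∀ w ∈ S, w.length = n ∧ Rich w := fun w hw => by
    rw [hS, Set.Finite.mem_toFinset] at hw; exact hw
  have hmaps : ∀ w ∈ S, F w ∈ idx := by
    intro w hw
    obtain ⟨hwlen, hwrich⟩ := hwS w hw
    have hwne : w ≠ [] := by
      intro hc'; rw [hc'] at hwlen; simp at hwlen; omega
    obtain ⟨hfl, hn0, hnd, hpal, hmax⟩ := upsFac_isUPS hwrich hwne
    have hlenpos : 1 ≤ (upsFac w).length := by
      rcases List.eq_nil_or_concat (upsFac w) with hc' | ⟨l', a, hc'⟩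
      · rw [hc'] at hfl; simp at hfl; exact absurd hfl (by simpa using hwne)
      · rw [hc']; simp
    have hbound := hUPS w hwrich (by omega) (upsFac w) ⟨hfl, hn0, hnd, hpal, hmax⟩
    rw [hwlen] at hbound
    have hle : (upsFac w).length ≤ κ := by
      have h2 : (((upsFac w).length : ℕ) : ℝ) ≤ (κ : ℝ) := le_trans hbound (Nat.le_ceil _)
      exact_mod_cast h2
    rw [hidx, hF, Finset.mem_sigma]
    refine ⟨Finset.mem_Icc.mpr ⟨hlenpos, hle⟩, Finset.mem_filter.mpr ⟨?_, ?_⟩⟩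
    · rw [Finset.Nat.mem_antidiagonalTuple]
      rw [sum_get_length, hfl, hwlen]
    · intro i
      show 1 ≤ ((upsFac w).get i).length
      have hni : (upsFac w).get i ≠ [] := fun hc' => hn0 (hc' ▸ List.get_mem _ i)
      have := List.length_pos_iff.2 hni
      omega
  have hcard := Finset.card_eq_sum_card_fiberwise hmaps
  have hnum : numRich q n = S.card := by
    rw [numRich, hS, Set.ncard_eq_toFinset_card _ hSfin]
  rw [hnum, hcard, hidx, Finset.sum_sigma]
  apply Finset.sum_le_sum
  intro p hp
  apply Finset.sum_le_sum
  intro f hfmem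
  have hRfin : ∀ m : ℕ, {u : List (Fin q) | u.length = m ∧ Rich u}.Finite := fun m =>
    Set.Finite.subset (List.finite_length_eq (Fin q) m) (fun u hu => hu.1)
  have hprod : (Fintype.piFinset (fun i : Fin p => (hRfin ((f i + 1) / 2)).toFinset)).card
      = ∏ i, numRich q ((f i + 1) / 2) := by
    rw [Fintype.card_piFinset]
    exact Finset.prod_congr rfl fun i _ => by
      rw [numRich, Set.ncard_eq_toFinset_card _ (hRfin _)]
  rw [← hprod]
  have hf1 : ∀ i, 1 ≤ f i := (Finset.mem_filter.mp hfmem).2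
  apply Finset.card_le_card_of_injOn
    (fun w => fun i : Fin p => if h : (i : ℕ) < (upsFac w).length
      then (((upsFac w).get ⟨i, h⟩).take ((((upsFac w).get ⟨i, h⟩).length + 1) / 2)) else [])
  · -- maps into piFinset
    intro w hw
    rw [Finset.mem_coe, Finset.mem_filter] at hw
    obtain ⟨hwS', hFw⟩ := hw
    obtain ⟨hwlen, hwrich⟩ := hwS w hwS'
    obtain ⟨hfl, hn0, hpal, hmax⟩ := upsFac_spec w
    rw [hF] at hFw
    obtain ⟨hfst, hsnd⟩ := Sigma.mk.inj_iff.mp hFw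
    have hsnd' : ∀ i : Fin (upsFac w).length,
        ((upsFac w).get i).length = f (Fin.cast hfst i) :=
      (Fin.heq_fun_iff hfst).mp hsnd
    rw [Finset.mem_coe, Fintype.mem_piFinset]
    intro i
    have hi : (i : ℕ) < (upsFac w).length := by rw [hfst]; exact i.isLt
    beta_reduce
    rw [dif_pos hi]
    set v := (upsFac w).get ⟨i, hi⟩ with hv
    have hvlen : v.length = f i := by
      have := hsnd' ⟨i, hi⟩
      rw [hv]; simpa using this
    have hvne : v ≠ [] := fun hc' => hn0 (hc' ▸ List.get_mem _ ⟨i, hi⟩)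
    have hvpos : 1 ≤ v.length := List.length_pos_iff.2 hvne
    rw [Set.Finite.mem_toFinset]
    constructor
    · rw [List.length_take, hvlen]
      have := hf1 i
      omega
    · -- the half prefix is rich
      have hinf : v <:+: w := by
        rw [← hfl]
        exact List.infix_of_mem_flatten (List.get_mem _ ⟨i, hi⟩)
      exact rich_infix ((List.take_prefix _ _).isInfix.trans hinf) hwrich
  · -- injectivity
    intro w hw w' hw' heqφ
    simp only [Finset.coe_filter, Set.mem_setOf_eq] at hw hw'
    obtain ⟨hwS', hFw⟩ := hw
    obtain ⟨hwS'', hFw'⟩ := hw'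
    obtain ⟨hfl, hn0, hpal, hmax⟩ := upsFac_spec w
    obtain ⟨hfl', hn0', hpal', hmax'⟩ := upsFac_spec w'
    rw [hF] at hFw hFw'
    obtain ⟨hfst, hsnd⟩ := Sigma.mk.inj_iff.mp hFw
    obtain ⟨hfst', hsnd'⟩ := Sigma.mk.inj_iff.mp hFw'
    have hlens : ∀ i : Fin (upsFac w).length,
        ((upsFac w).get i).length = f (Fin.cast hfst i) :=
      (Fin.heq_fun_iff hfst).mp hsnd
    have hlens' : ∀ i : Fin (upsFac w').length,
        ((upsFac w').get i).length = f (Fin.cast hfst' i) :=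
      (Fin.heq_fun_iff hfst').mp hsnd'
    have hlenlen : (upsFac w).length = (upsFac w').length := by rw [hfst, hfst']
    have heqfac : upsFac w = upsFac w' := by
      apply List.ext_get hlenlen
      intro k hk hk'
      have hkp : k < p := by rw [← hfst]; exact hk
      have hφk := congrFun heqφ ⟨k, hkp⟩
      simp only [dif_pos hk, dif_pos hk'] at hφk
      set v := (upsFac w).get ⟨k, hk⟩ with hv
      set v' := (upsFac w').get ⟨k, hk'⟩ with hv'
      have hvlen : v.length = f ⟨k, hkp⟩ := by
        have := hlens ⟨k, hk⟩; rw [hv]; simpa using this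
      have hvlen' : v'.length = f ⟨k, hkp⟩ := by
        have := hlens' ⟨k, hk'⟩; rw [hv']; simpa using this
      have hll : v.length = v'.length := by rw [hvlen, hvlen']
      apply pal_take_half_eq (hpal ⟨k, hk⟩) (hpal' ⟨k, hk'⟩) hll
      have hgoal := hφk
      rw [hll]
      rw [hll] at hgoal
      exact hgoal
    have : w = w' := by rw [← hfl, ← hfl', heqfac]
    exact this
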